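/- Let m ≥ 1 and let q_1, q_2, …, q_m be real numbers in the interval [0,1]. Then Σ_{1 ≤ i < j ≤ m} |q_i - q_j|^2 ≤ ⌊m/2⌋ · ⌈m/2⌉. -/

import Mathlib

open Finset

lemma pair_identity (m : ℕ) (q : Fin m → ℝ) :
    ∑ p ∈ Finset.univ.filter (fun p : Fin m × Fin m => p.1 < p.2), (q p.1 - q p.2) ^ 2
      = m * (∑ i, q i ^ 2) - (∑ i, q i) ^ 2 := by
  have htot : ∑ p : Fin m × Fin m, (q p.1 - q p.2) ^ 2
      = 2 * (m * (∑ i, q i ^ 2) - (∑ i, q i) ^ 2) := by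
    rw [Fintype.sum_prod_type]
    simp only [sub_sq, Finset.sum_add_distrib, Finset.sum_sub_distrib, Finset.sum_const,
      Finset.card_univ, Fintype.card_fin, nsmul_eq_mul, ← Finset.mul_sum, ← Finset.sum_mul]
    ring
  have hswap : ∑ p ∈ Finset.univ.filter (fun p : Fin m × Fin m => p.2 < p.1), (q p.1 - q p.2) ^ 2
      = ∑ p ∈ Finset.univ.filter (fun p : Fin m × Fin m => p.1 < p.2), (q p.1 - q p.2) ^ 2 := by
    apply Finset.sum_nbij' (fun p => Prod.swap p) (fun p => Prod.swap p)
    · intro p hp; simp at hp ⊢; exact hp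
    · intro p hp; simp at hp ⊢; exact hp
    · intro p _; simp
    · intro p _; simp
    · intro p _; simp [Prod.swap]; ring
  have hsplit : (Finset.univ.filter (fun p : Fin m × Fin m => p.1 < p.2)) ∪
      (Finset.univ.filter (fun p : Fin m × Fin m => p.2 < p.1))
      = Finset.univ.filter (fun p : Fin m × Fin m => p.1 ≠ p.2) := by
    rw [← Finset.filter_or]
    apply Finset.filter_congr
    intro p _
    simp [lt_or_lt_iff_ne]
  have hne : ∑ p ∈ Finset.univ.filter (fun p : Fin m × Fin m => p.1 ≠ p.2), (q p.1 - q p.2) ^ 2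
      = ∑ p : Fin m × Fin m, (q p.1 - q p.2) ^ 2 := by
    apply Finset.sum_subset (Finset.filter_subset _ _)
    intro p _ hp
    simp only [Finset.mem_filter, Finset.mem_univ, true_and, not_not] at hp
    simp [hp]
  have hdisj : Disjoint (Finset.univ.filter (fun p : Fin m × Fin m => p.1 < p.2))
      (Finset.univ.filter (fun p : Fin m × Fin m => p.2 < p.1)) := by
    rw [Finset.disjoint_filter]
    intro p _ h1 h2
    exact absurd h2 (not_lt.2 h1.le)
  have := Finset.sum_union hdisj (f := fun p : Fin m × Fin m => (q p.1 - q p.2) ^ 2)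
  rw [hsplit, hne, htot, hswap] at this
  linarith


lemma nat_bound (m k : ℕ) (hk : k ≤ m) :
    (k : ℝ) * ((m : ℝ) - k) ≤ ((m / 2 * ((m + 1) / 2) : ℕ) : ℝ) := by
  rcases Nat.even_or_odd m with ⟨a, rfl⟩ | ⟨a, rfl⟩
  · have h1 : (a + a) / 2 = a := by omega
    have h2 : (a + a + 1) / 2 = a := by omega
    rw [h1, h2]
    push_cast
    nlinarith [sq_nonneg ((a : ℝ) - k)]
  · have h1 : (2 * a + 1) / 2 = a := by omega
    have h2 : (2 * a + 1 + 1) / 2 = a + 1 := by omega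
    rw [h1, h2]
    have hz : (0 : ℤ) ≤ ((a : ℤ) - k) * ((a : ℤ) - k + 1) := by
      rcases le_or_gt (k : ℤ) a with h | h
      · exact mul_nonneg (by linarith) (by linarith)
      · nlinarith
    have : (k : ℤ) * ((2 * a + 1 : ℤ) - k) ≤ (a : ℤ) * (a + 1) := by nlinarith
    have := (by exact_mod_cast this : (k : ℝ) * ((2 * (a:ℝ) + 1) - k) ≤ (a : ℝ) * (a + 1))
    push_cast at this ⊢
    linarith


lemma key (m : ℕ) : ∀ (n : ℕ) (q : Fin m → ℝ), (∀ i, q i ∈ Set.Icc (0:ℝ) 1) →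
    (Finset.univ.filter (fun i => q i ≠ 0 ∧ q i ≠ 1)).card ≤ n →
    ∑ p ∈ Finset.univ.filter (fun p : Fin m × Fin m => p.1 < p.2), (q p.1 - q p.2) ^ 2
      ≤ ((m / 2 * ((m + 1) / 2) : ℕ) : ℝ) := by
  intro n
  induction n with
  | zero =>
    intro q hq hcard
    have hval : ∀ i, q i = 0 ∨ q i = 1 := by
      intro i
      by_contra h
      push_neg at h
      have : i ∈ Finset.univ.filter (fun i => q i ≠ 0 ∧ q i ≠ 1) := by
        simp [h.1, h.2]
      have := Finset.card_pos.2 ⟨i, this⟩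
      omega
    set k := (Finset.univ.filter (fun i => q i = 1)).card with hk
    have hsum : ∑ i, q i = k := by
      rw [← Finset.sum_filter_add_sum_filter_not Finset.univ (fun i => q i = 1)]
      have h1 : ∑ i ∈ Finset.univ.filter (fun i => q i = 1), q i = k := by
        rw [Finset.sum_congr rfl (fun i hi => (Finset.mem_filter.1 hi).2)]
        simp [hk]
      have h2 : ∑ i ∈ Finset.univ.filter (fun i => ¬ q i = 1), q i = 0 := by
        apply Finset.sum_eq_zero
        intro i hi
        rcases hval i with h | h
        · exact h
        · exact absurd h (Finset.mem_filter.1 hi).2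
      rw [h1, h2, add_zero]
    have hsq : ∑ i, q i ^ 2 = ∑ i, q i := by
      apply Finset.sum_congr rfl
      intro i _
      rcases hval i with h | h <;> simp [h]
    rw [pair_identity, hsq, hsum]
    have hkm : k ≤ m := by
      calc k ≤ (Finset.univ : Finset (Fin m)).card := Finset.card_filter_le _ _
      _ = m := by simp
    have := nat_bound m k hkm
    nlinarith
  | succ n ih =>
    intro q hq hcard
    by_cases hex : ∃ i, q i ≠ 0 ∧ q i ≠ 1
    · obtain ⟨i, hi0, hi1⟩ := hex
      set x := q i with hx
      have hxI := hq i
      set q0 := Function.update q i (0 : ℝ) with hq0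
      set q1 := Function.update q i (1 : ℝ) with hq1
      have hmemi : i ∈ Finset.univ.filter (fun j => q j ≠ 0 ∧ q j ≠ 1) := by
        simp [← hx, hi0, hi1]
      have hcard' : ∀ (c : ℝ) (hc : c = 0 ∨ c = 1),
          (Finset.univ.filter (fun j => Function.update q i c j ≠ 0 ∧ Function.update q i c j ≠ 1)).card ≤ n := by
        intro c hc
        have hsub : Finset.univ.filter (fun j => Function.update q i c j ≠ 0 ∧ Function.update q i c j ≠ 1)
            ⊆ (Finset.univ.filter (fun j => q j ≠ 0 ∧ q j ≠ 1)).erase i := by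
          intro j hj
          simp only [Finset.mem_filter, Finset.mem_univ, true_and] at hj
          have hji : j ≠ i := by
            intro h
            rw [h, Function.update_self] at hj
            rcases hc with hc | hc
            · exact hj.1 hc
            · exact hj.2 hc
          rw [Function.update_of_ne hji] at hj
          simp [Finset.mem_erase, hji, hj.1, hj.2]
        calc _ ≤ ((Finset.univ.filter (fun j => q j ≠ 0 ∧ q j ≠ 1)).erase i).card :=
              Finset.card_le_card hsub
          _ = (Finset.univ.filter (fun j => q j ≠ 0 ∧ q j ≠ 1)).card - 1 :=
              Finset.card_erase_of_mem hmemi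
          _ ≤ n := by omega
      have hqm : ∀ (c : ℝ), c ∈ Set.Icc (0:ℝ) 1 → ∀ j, Function.update q i c j ∈ Set.Icc (0:ℝ) 1 := by
        intro c hc j
        by_cases h : j = i
        · rw [h, Function.update_self]; exact hc
        · rw [Function.update_of_ne h]; exact hq j
      have h0 := ih q0 (hqm 0 (by norm_num)) (hcard' 0 (Or.inl rfl))
      have h1 := ih q1 (hqm 1 (by norm_num)) (hcard' 1 (Or.inr rfl))
      have hconv : ∑ p ∈ Finset.univ.filter (fun p : Fin m × Fin m => p.1 < p.2), (q p.1 - q p.2) ^ 2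
          ≤ (1 - x) * ∑ p ∈ Finset.univ.filter (fun p : Fin m × Fin m => p.1 < p.2), (q0 p.1 - q0 p.2) ^ 2
            + x * ∑ p ∈ Finset.univ.filter (fun p : Fin m × Fin m => p.1 < p.2), (q1 p.1 - q1 p.2) ^ 2 := by
        rw [Finset.mul_sum, Finset.mul_sum, ← Finset.sum_add_distrib]
        apply Finset.sum_le_sum
        intro p hp
        have hpne : p.1 ≠ p.2 := by
          simp only [Finset.mem_filter] at hp
          exact ne_of_lt hp.2
        by_cases h1' : i = p.1
        · have h2' : p.2 ≠ i := fun h => hpne (h1' ▸ h.symm ▸ rfl)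
          simp only [hq0, hq1, ← h1', Function.update_self, Function.update_of_ne h2']
          nlinarith [mul_nonneg (sub_nonneg.2 hxI.2) hxI.1]
        · by_cases h2' : i = p.2
          · have h1'' : p.1 ≠ i := fun h => h1' h.symm
            simp only [hq0, hq1, ← h2', Function.update_self, Function.update_of_ne h1'']
            nlinarith [mul_nonneg (sub_nonneg.2 hxI.2) hxI.1]
          · have ha : p.1 ≠ i := fun h => h1' h.symm
            have hb : p.2 ≠ i := fun h => h2' h.symm
            simp only [hq0, hq1, Function.update_of_ne ha, Function.update_of_ne hb]
            exact le_of_eq (by ring)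
      calc _ ≤ _ := hconv
        _ ≤ (1 - x) * ((m / 2 * ((m + 1) / 2) : ℕ) : ℝ) + x * ((m / 2 * ((m + 1) / 2) : ℕ) : ℝ) := by
            have hx0 : 0 ≤ x := hxI.1
            have hx1 : x ≤ 1 := hxI.2
            gcongr <;> linarith
        _ = ((m / 2 * ((m + 1) / 2) : ℕ) : ℝ) := by ring
    · push_neg at hex
      apply ih q hq
      have hempty : Finset.univ.filter (fun i => q i ≠ 0 ∧ q i ≠ 1) = ∅ := by
        rw [Finset.filter_eq_empty_iff]
        intro i _ h
        exact h.2 (hex i h.1)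
      simp [hempty]

/-- For `m ≥ 1` and reals `q₁, …, q_m ∈ [0,1]`,
`∑_{i<j} |q_i - q_j|² ≤ ⌊m/2⌋·⌈m/2⌉`. -/
theorem stmt_9 (m : ℕ) (hm : 1 ≤ m) (q : Fin m → ℝ)
    (hq : ∀ i, q i ∈ Set.Icc (0 : ℝ) 1) :
    ∑ p ∈ Finset.univ.filter (fun p : Fin m × Fin m => p.1 < p.2), |q p.1 - q p.2| ^ 2 ≤
      ((m / 2 * ((m + 1) / 2) : ℕ) : ℝ) := by
  simp only [sq_abs]
  exact key m (Finset.univ.filter (fun i => q i ≠ 0 ∧ q i ≠ 1)).card q hq le_rfl
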